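/- arXiv:2002.00266 — 2 statements merged into one kernel-verified Lean document; each statement's English description precedes it below -/
import Mathlib

section
/- Let k be a field and let B be an associative unital k-algebra equipped with an ℕ-grading, given by k-submodules 𝒜 n of B (n ∈ ℕ) such that B is the internal direct sum of the 𝒜 n, 1 ∈ 𝒜 0, and 𝒜 m · 𝒜 n ⊆ 𝒜 (m+n). If B is finite-dimensional over k and B is a semisimple ring, then B is concentrated in degree zero: 𝒜 n = 0 for every n ≥ 1. -/
/-- Let `k` be a field and `B` an associative unital `k`-algebra with an ℕ-grading given by
`k`-submodules `𝒜 n` such that `B` is the internal direct sum of the `𝒜 n`, `1 ∈ 𝒜 0`,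
and `𝒜 m * 𝒜 n ⊆ 𝒜 (m + n)`.  If `B` is finite-dimensional over `k` and `B` is a
semisimple ring, then `B` is concentrated in degree zero: `𝒜 n = 0` for all `n ≥ 1`. -/
theorem semisimple_graded_concentrated_in_degree_zero
    (k : Type*) [Field k] (B : Type*) [Ring B] [Algebra k B]
    (𝒜 : ℕ → Submodule k B)
    (hinternal : DirectSum.IsInternal 𝒜)
    (hone : (1 : B) ∈ 𝒜 0)
    (hmul : ∀ m n : ℕ, ∀ x ∈ 𝒜 m, ∀ y ∈ 𝒜 n, x * y ∈ 𝒜 (m + n))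
    (hfd : FiniteDimensional k B)
    (hss : IsSemisimpleRing B) :
    ∀ n : ℕ, 1 ≤ n → 𝒜 n = ⊥ := by
  classical
  -- finitely many nonzero pieces
  have hfin : {n | 𝒜 n ≠ ⊥}.Finite :=
    WellFoundedGT.finite_ne_bot_of_iSupIndep hinternal.submodule_iSupIndep
  obtain ⟨N, hN⟩ : ∃ N : ℕ, ∀ n, N < n → 𝒜 n = ⊥ := by
    obtain ⟨N, hN⟩ := hfin.bddAbove
    exact ⟨N, fun n hn => by_contra fun h => absurd (hN h) (not_le.mpr hn)⟩
  -- the submodules of elements of degree ≥ p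
  set S : ℕ → Submodule k B := fun p => ⨆ n, ⨆ _ : p ≤ n, 𝒜 n with hS
  have hA_le_S : ∀ p n, p ≤ n → 𝒜 n ≤ S p := fun p n h =>
    le_iSup_of_le n (le_iSup_of_le h le_rfl)
  have hSmul : ∀ a b : ℕ, S a * S b ≤ S (a + b) := by
    intro a b
    rw [hS]
    simp only [Submodule.iSup_mul, Submodule.mul_iSup]
    refine iSup₂_le fun n hn => iSup₂_le fun m hm => ?_
    refine le_trans (Submodule.mul_le.mpr fun x hx y hy => hmul m n x hx y hy) ?_
    exact hA_le_S _ _ (add_le_add hm hn)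
  have hSpow : ∀ p : ℕ, S 1 ^ (p + 1) ≤ S (p + 1) := by
    intro p
    induction p with
    | zero => simp
    | succ q ih =>
      calc S 1 ^ (q + 1 + 1) = S 1 ^ (q + 1) * S 1 := pow_succ _ _
        _ ≤ S (q + 1) * S 1 := mul_le_mul' ih le_rfl
        _ ≤ S (q + 1 + 1) := hSmul _ _
  have hSbot : S (N + 1) = ⊥ := by
    refine le_bot_iff.mp (iSup₂_le fun n hn => ?_)
    rw [hN n (lt_of_lt_of_le (Nat.lt_succ_self N) hn)]
  -- S 1 is closed under left multiplication by B
  have htop : (⊤ : Submodule k B) * S 1 ≤ S 1 := by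
    rw [← hinternal.submodule_iSup_eq_top, hS]
    simp only [Submodule.iSup_mul, Submodule.mul_iSup]
    refine iSup₂_le fun n hn => iSup_le fun m => ?_
    refine le_trans (Submodule.mul_le.mpr fun x hx y hy => hmul m n x hx y hy) ?_
    exact hA_le_S _ _ (le_trans hn (Nat.le_add_left n m))
  -- the left ideal generated by elements of positive degree
  set J : Ideal B := Ideal.span (S 1 : Set B) with hJ
  have hJS : ∀ x ∈ J, x ∈ S 1 := by
    intro x hx
    refine Submodule.span_induction (fun y hy => hy) (Submodule.zero_mem _)
      (fun y z _ _ hy hz => Submodule.add_mem _ hy hz) ?_ hx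
    intro b y _ hy
    exact htop (Submodule.mul_mem_mul Submodule.mem_top hy)
  obtain ⟨e, he, hJe⟩ := IsSemisimpleRing.ideal_eq_span_idempotent J
  have heJ : e ∈ J := hJe ▸ Ideal.subset_span rfl
  have he0 : e = 0 := by
    have hmem : e ^ (N + 1) ∈ S 1 ^ (N + 1) := Submodule.pow_mem_pow _ (hJS e heJ) _
    rw [he.pow_succ_eq N] at hmem
    have := hSpow N hmem
    rw [hSbot] at this
    exact this
  have hJbot : J = ⊥ := by
    rw [hJe, he0, Ideal.span_singleton_eq_bot]
  intro n hn
  refine le_bot_iff.mp fun x hx => ?_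
  have hxJ : x ∈ J := Ideal.subset_span (hA_le_S 1 n hn hx)
  rw [hJbot] at hxJ
  exact hxJ
end

section
/- Let R be a commutative ring, R' a commutative R-algebra that is flat as an R-module, and M an R-module that is the union of a directed family of submodules (M_λ)_{λ ∈ Λ}, i.e., the family is directed under inclusion and ⨆_λ M_λ = M. If the R'-module R' ⊗_R M is finitely generated, then there exists an index λ such that the natural map R' ⊗_R M_λ → R' ⊗_R M (induced by the inclusion M_λ ⊆ M) is an isomorphism. -/
open TensorProduct

/-- Let `R'` be a flat commutative `R`-algebra and `M` an `R`-module that is the directed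
union of a family of submodules `(M_λ)`.  If `R' ⊗[R] M` is a finitely generated
`R'`-module, then there is an index `λ` such that the natural map
`R' ⊗[R] M_λ → R' ⊗[R] M` is an isomorphism. -/
theorem finite_tensor_factors_through_stage
    (R R' : Type*) [CommRing R] [CommRing R'] [Algebra R R'] [Module.Flat R R']
    (M : Type*) [AddCommGroup M] [Module R M]
    (Λ : Type*) [Nonempty Λ] (Mf : Λ → Submodule R M)
    (hdir : Directed (· ≤ ·) Mf) (hsup : ⨆ l, Mf l = ⊤)
    [Module.Finite R' (R' ⊗[R] M)] :
    ∃ l : Λ, Function.Bijective (LinearMap.lTensor R' (Mf l).subtype) := by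
  classical
  -- ranges of the base-changed inclusions, as R'-submodules
  set N : Λ → Submodule R' (R' ⊗[R] M) :=
    fun l => LinearMap.range (((Mf l).subtype).baseChange R') with hN
  have hNle : ∀ l l', Mf l ≤ Mf l' → N l ≤ N l' := by
    intro l l' hle
    rintro x ⟨y, rfl⟩
    induction y using TensorProduct.induction_on with
    | zero => simp
    | tmul a m => exact ⟨a ⊗ₜ ⟨(m : M), hle m.2⟩, rfl⟩
    | add y z hy hz => rw [map_add]; exact Submodule.add_mem _ hy hz
  have hNdir : Directed (· ≤ ·) N := fun l l' => by
    obtain ⟨k, h1, h2⟩ := hdir l l'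
    exact ⟨k, hNle _ _ h1, hNle _ _ h2⟩
  have hNsup : ⨆ l, N l = ⊤ := by
    rw [eq_top_iff]
    rintro x -
    induction x using TensorProduct.induction_on with
    | zero => simp
    | tmul a m =>
      have hm : m ∈ ⨆ l, Mf l := hsup ▸ Submodule.mem_top
      obtain ⟨l, hl⟩ := (Submodule.mem_iSup_of_directed _ hdir).1 hm
      exact Submodule.mem_iSup_of_mem l ⟨a ⊗ₜ ⟨m, hl⟩, rfl⟩
    | add y z hy hz => exact Submodule.add_mem _ hy hz
  -- top is compact since the module is finite
  have hfg : (⊤ : Submodule R' (R' ⊗[R] M)).FG := Module.Finite.fg_top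
  have hcomp := (Submodule.fg_iff_compact _).1 hfg
  rw [CompleteLattice.isCompactElement_iff_le_of_directed_sSup_le] at hcomp
  obtain ⟨x, ⟨l, rfl⟩, hx⟩ := hcomp (Set.range N) (Set.range_nonempty N)
    (hNdir.directedOn_range) (by rw [sSup_range, hNsup])
  refine ⟨l, ?_, ?_⟩
  · have := Module.Flat.lTensor_preserves_injective_linearMap (M := R')
      ((Mf l).subtype) (Submodule.injective_subtype _)
    exact this
  · have hsurj : Function.Surjective ((Mf l).subtype.baseChange R') := by
      rw [← LinearMap.range_eq_top, eq_top_iff]; exact hx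
    rwa [LinearMap.baseChange_eq_ltensor] at hsurj
end
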